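/- arXiv:1501.06224 — 2 statements merged into one kernel-verified Lean document; each statement's English description precedes it below -/
import Mathlib

section
/- Let Φ be an N-function with l ≤ tΦ'(t)/Φ(t) ≤ m for t > 0 where 1 < l ≤ m < N, and define the Sobolev conjugate Φ⋆ by Φ⋆⁻¹(t) = ∫₀^t Φ⁻¹(s)/s^{(N+1)/N} ds. Then l* ≤ t Φ⋆'(t)/Φ⋆(t) ≤ m* for all t > 0, where l* = lN/(N−l) and m* = mN/(N−m). -/
open Set Filter intervalIntegral
open Topology MeasureTheory Real

lemma sci_ratio_pow_le {Φ Φ' : ℝ → ℝ} {m : ℝ}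
    (hderiv : ∀ t : ℝ, 0 < t → HasDerivAt Φ (Φ' t) t)
    (hub : ∀ t : ℝ, 0 < t → t * Φ' t ≤ m * Φ t)
    {a b : ℝ} (ha : 0 < a) (hab : a ≤ b) :
    Φ b * a ^ m ≤ Φ a * b ^ m := by
  have hb : 0 < b := lt_of_lt_of_le ha hab
  set g : ℝ → ℝ := fun t => Φ t * t ^ (-m) with hg
  have hgderiv : ∀ x : ℝ, 0 < x →
      HasDerivAt g (Φ' x * x ^ (-m) + Φ x * (-m * x ^ (-m - 1))) x := by
    intro x hx
    exact (hderiv x hx).mul (Real.hasDerivAt_rpow_const (Or.inl hx.ne'))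
  have anti : AntitoneOn g (Icc a b) := by
    apply antitoneOn_of_deriv_nonpos (convex_Icc a b)
    · intro x hx
      exact ((hgderiv x (lt_of_lt_of_le ha hx.1)).continuousAt).continuousWithinAt
    · intro x hx
      rw [interior_Icc] at hx
      exact ((hgderiv x (lt_trans ha hx.1)).differentiableAt).differentiableWithinAt
    · intro x hx
      rw [interior_Icc] at hx
      have hx0 : 0 < x := lt_trans ha hx.1
      rw [(hgderiv x hx0).deriv]
      have key : x ^ (-m) = x ^ (-m - 1) * x := by
        rw [show -m = -m - 1 + 1 by ring, Real.rpow_add hx0, Real.rpow_one]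
        ring_nf
      have h1 : x * Φ' x ≤ m * Φ x := hub x hx0
      have h2 : (0:ℝ) ≤ x ^ (-m - 1) := (Real.rpow_pos_of_pos hx0 _).le
      calc Φ' x * x ^ (-m) + Φ x * (-m * x ^ (-m - 1))
          = x ^ (-m - 1) * (x * Φ' x - m * Φ x) := by rw [key]; ring
        _ ≤ 0 := mul_nonpos_of_nonneg_of_nonpos h2 (by linarith)
  have h := anti (left_mem_Icc.2 hab) (right_mem_Icc.2 hab) hab
  -- h : Φ b * b ^ (-m) ≤ Φ a * a ^ (-m)
  have hpa : (0:ℝ) < a ^ m := Real.rpow_pos_of_pos ha m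
  have hpb : (0:ℝ) < b ^ m := Real.rpow_pos_of_pos hb m
  rw [hg] at h
  simp only [Real.rpow_neg ha.le, Real.rpow_neg hb.le] at h
  calc Φ b * a ^ m = (Φ b * (b ^ m)⁻¹) * (a ^ m * b ^ m) := by field_simp
    _ ≤ (Φ a * (a ^ m)⁻¹) * (a ^ m * b ^ m) := by
        apply mul_le_mul_of_nonneg_right h (by positivity)
    _ = Φ a * b ^ m := by field_simp

lemma sci_ratio_pow_ge {Φ Φ' : ℝ → ℝ} {l : ℝ}
    (hderiv : ∀ t : ℝ, 0 < t → HasDerivAt Φ (Φ' t) t)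
    (hlb : ∀ t : ℝ, 0 < t → l * Φ t ≤ t * Φ' t)
    {a b : ℝ} (ha : 0 < a) (hab : a ≤ b) :
    Φ a * b ^ l ≤ Φ b * a ^ l := by
  have hb : 0 < b := lt_of_lt_of_le ha hab
  set g : ℝ → ℝ := fun t => Φ t * t ^ (-l) with hg
  have hgderiv : ∀ x : ℝ, 0 < x →
      HasDerivAt g (Φ' x * x ^ (-l) + Φ x * (-l * x ^ (-l - 1))) x := by
    intro x hx
    exact (hderiv x hx).mul (Real.hasDerivAt_rpow_const (Or.inl hx.ne'))
  have mono : MonotoneOn g (Icc a b) := by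
    apply monotoneOn_of_deriv_nonneg (convex_Icc a b)
    · intro x hx
      exact ((hgderiv x (lt_of_lt_of_le ha hx.1)).continuousAt).continuousWithinAt
    · intro x hx
      rw [interior_Icc] at hx
      exact ((hgderiv x (lt_trans ha hx.1)).differentiableAt).differentiableWithinAt
    · intro x hx
      rw [interior_Icc] at hx
      have hx0 : 0 < x := lt_trans ha hx.1
      rw [(hgderiv x hx0).deriv]
      have key : x ^ (-l) = x ^ (-l - 1) * x := by
        rw [show -l = -l - 1 + 1 by ring, Real.rpow_add hx0, Real.rpow_one]
        ring_nf
      have h1 : l * Φ x ≤ x * Φ' x := hlb x hx0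
      have h2 : (0:ℝ) ≤ x ^ (-l - 1) := (Real.rpow_pos_of_pos hx0 _).le
      calc (0:ℝ) ≤ x ^ (-l - 1) * (x * Φ' x - l * Φ x) :=
            mul_nonneg h2 (by linarith)
        _ = Φ' x * x ^ (-l) + Φ x * (-l * x ^ (-l - 1)) := by rw [key]; ring
  have h := mono (left_mem_Icc.2 hab) (right_mem_Icc.2 hab) hab
  have hpa : (0:ℝ) < a ^ l := Real.rpow_pos_of_pos ha l
  have hpb : (0:ℝ) < b ^ l := Real.rpow_pos_of_pos hb l
  rw [hg] at h
  simp only [Real.rpow_neg ha.le, Real.rpow_neg hb.le] at h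
  calc Φ a * b ^ l = (Φ a * (a ^ l)⁻¹) * (a ^ l * b ^ l) := by field_simp
    _ ≤ (Φ b * (b ^ l)⁻¹) * (a ^ l * b ^ l) := by
        apply mul_le_mul_of_nonneg_right h (by positivity)
    _ = Φ b * a ^ l := by field_simp

theorem sobolev_conjugate_index
    (Φ Φ' Φinv Φstar Φstar' : ℝ → ℝ) (l m N : ℝ)
    (hconv : ConvexOn ℝ univ Φ)
    (heven : ∀ t : ℝ, Φ (-t) = Φ t)
    (hΦ0 : Φ 0 = 0)
    (hΦpos : ∀ t : ℝ, t ≠ 0 → 0 < Φ t)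
    (hlim0 : Tendsto (fun t => Φ t / t) (nhdsWithin 0 (Ioi 0)) (nhds 0))
    (hliminf : Tendsto (fun t => Φ t / t) atTop atTop)
    (hderiv : ∀ t : ℝ, 0 < t → HasDerivAt Φ (Φ' t) t)
    (hl : 1 < l) (hlm : l ≤ m) (hmN : m < N)
    (hidx : ∀ t : ℝ, 0 < t → l ≤ t * Φ' t / Φ t ∧ t * Φ' t / Φ t ≤ m)
    (hinv : ∀ t : ℝ, 0 ≤ t → Φinv (Φ t) = t ∧ Φ (Φinv t) = t)
    (hstar_pos : ∀ t : ℝ, 0 < t → 0 < Φstar t)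
    (hstar_inv : ∀ t : ℝ, 0 ≤ t →
      (∫ s in (0:ℝ)..(Φstar t), Φinv s / s ^ ((N + 1) / N)) = t)
    (hstar_deriv : ∀ t : ℝ, 0 < t → HasDerivAt Φstar (Φstar' t) t) :
    ∀ t : ℝ, 0 < t →
      l * N / (N - l) ≤ t * Φstar' t / Φstar t ∧
      t * Φstar' t / Φstar t ≤ m * N / (N - m) := by
  intro t ht
  have hl0 : (0:ℝ) < l := lt_trans zero_lt_one hl
  have hm1 : (1:ℝ) < m := lt_of_lt_of_le hl hlm
  have hm0 : (0:ℝ) < m := lt_trans zero_lt_one hm1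
  have hN0 : (0:ℝ) < N := lt_trans hm0 hmN
  have hlN : l < N := lt_of_le_of_lt hlm hmN
  set p : ℝ := (N + 1) / N with hp
  have hp1 : p = 1 + 1/N := by rw [hp]; field_simp
  have hP : ∀ u : ℝ, 0 < u → 0 < Φ u := fun u hu => hΦpos u hu.ne'
  have hub : ∀ u : ℝ, 0 < u → u * Φ' u ≤ m * Φ u := by
    intro u hu
    have h2 := (hidx u hu).2
    have h3 := hP u hu
    have := (div_le_iff₀ h3).mp h2
    linarith
  have hlb : ∀ u : ℝ, 0 < u → l * Φ u ≤ u * Φ' u := by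
    intro u hu
    have h2 := (hidx u hu).1
    have h3 := hP u hu
    have := (le_div_iff₀ h3).mp h2
    linarith
  have hinv0 : Φinv 0 = 0 := by
    have := (hinv 0 le_rfl).1
    rwa [hΦ0] at this
  have hinv_nonneg : ∀ u : ℝ, 0 ≤ u → 0 ≤ Φinv u := by
    intro u hu
    rcases le_total 0 (Φinv u) with h | h
    · exact h
    · have h2 : Φ (-(Φinv u)) = u := by rw [heven]; exact (hinv u hu).2
      have h3 := (hinv (-(Φinv u)) (neg_nonneg.2 h)).1
      rw [h2] at h3
      linarith
  have hinv_pos : ∀ u : ℝ, 0 < u → 0 < Φinv u := by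
    intro u hu
    rcases eq_or_lt_of_le (hinv_nonneg u hu.le) with h | h
    · exfalso
      have := (hinv u hu.le).2
      rw [← h, hΦ0] at this
      linarith
    · exact h
  have hΦmono : ∀ x y : ℝ, 0 ≤ x → x < y → Φ x < Φ y := by
    intro x y hx0 hxy
    have hy0 : 0 < y := lt_of_le_of_lt hx0 hxy
    rcases eq_or_lt_of_le hx0 with h | h
    · rw [← h, hΦ0]; exact hP y hy0
    · have hc := sci_ratio_pow_ge hderiv hlb h hxy.le
      have hyl : (0:ℝ) < y ^ l := Real.rpow_pos_of_pos hy0 l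
      have hxl : x ^ l < y ^ l := Real.rpow_lt_rpow h.le hxy hl0
      have h2 : Φ x * y ^ l < Φ y * y ^ l :=
        lt_of_le_of_lt hc (mul_lt_mul_of_pos_left hxl (hP y hy0))
      exact lt_of_mul_lt_mul_right h2 hyl.le
  have hinv_mono : MonotoneOn Φinv (Ici 0) := by
    intro u hu v hv huv
    by_contra hlt
    push_neg at hlt
    have h2 := hΦmono (Φinv v) (Φinv u) (hinv_nonneg v hv) hlt
    rw [(hinv v hv).2, (hinv u hu).2] at h2
    exact absurd huv (not_le.2 h2)
  have hBu : ∀ u v : ℝ, 0 < u → u ≤ v → Φinv u ≤ Φinv v * (u/v) ^ (1/m) := by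
    intro u v hu huv
    have hv : 0 < v := lt_of_lt_of_le hu huv
    have hx : 0 < Φinv u := hinv_pos u hu
    have hy : 0 < Φinv v := hinv_pos v hv
    have hxy : Φinv u ≤ Φinv v := hinv_mono (mem_Ici.2 hu.le) (mem_Ici.2 hv.le) huv
    have hc := sci_ratio_pow_le hderiv hub hx hxy
    rw [(hinv u hu.le).2, (hinv v hv.le).2] at hc
    -- hc : v * Φinv u ^ m ≤ u * Φinv v ^ m
    have h1 : Φinv u ^ m ≤ u / v * Φinv v ^ m := by
      rw [div_mul_eq_mul_div, le_div_iff₀ hv]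
      nlinarith
    have h2 : (Φinv u ^ m) ^ (1/m) ≤ (u / v * Φinv v ^ m) ^ (1/m) :=
      Real.rpow_le_rpow (by positivity) h1 (by positivity)
    have hxm : (Φinv u ^ m) ^ (1/m) = Φinv u := by
      rw [← Real.rpow_mul hx.le, mul_one_div, div_self hm0.ne', Real.rpow_one]
    have hym : (Φinv v ^ m) ^ (1/m) = Φinv v := by
      rw [← Real.rpow_mul hy.le, mul_one_div, div_self hm0.ne', Real.rpow_one]
    rw [hxm, Real.mul_rpow (by positivity) (by positivity), hym] at h2
    linarith [h2]
  have hBl : ∀ u v : ℝ, 0 < u → u ≤ v → Φinv v * (u/v) ^ (1/l) ≤ Φinv u := by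
    intro u v hu huv
    have hv : 0 < v := lt_of_lt_of_le hu huv
    have hx : 0 < Φinv u := hinv_pos u hu
    have hy : 0 < Φinv v := hinv_pos v hv
    have hxy : Φinv u ≤ Φinv v := hinv_mono (mem_Ici.2 hu.le) (mem_Ici.2 hv.le) huv
    have hc := sci_ratio_pow_ge hderiv hlb hx hxy
    rw [(hinv u hu.le).2, (hinv v hv.le).2] at hc
    -- hc : u * Φinv v ^ l ≤ v * Φinv u ^ l
    have h1 : u / v * Φinv v ^ l ≤ Φinv u ^ l := by
      rw [div_mul_eq_mul_div, div_le_iff₀ hv]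
      nlinarith
    have h2 : (u / v * Φinv v ^ l) ^ (1/l) ≤ (Φinv u ^ l) ^ (1/l) :=
      Real.rpow_le_rpow (by positivity) h1 (by positivity)
    have hxm : (Φinv u ^ l) ^ (1/l) = Φinv u := by
      rw [← Real.rpow_mul hx.le, mul_one_div, div_self hl0.ne', Real.rpow_one]
    have hym : (Φinv v ^ l) ^ (1/l) = Φinv v := by
      rw [← Real.rpow_mul hy.le, mul_one_div, div_self hl0.ne', Real.rpow_one]
    rw [hxm, Real.mul_rpow (by positivity) (by positivity), hym] at h2
    linarith [h2]
  set s : ℝ := Φstar t with hsdef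
  have hs : 0 < s := hstar_pos t ht
  set f : ℝ → ℝ := fun u => Φinv u / u ^ p with hf
  have hp0 : (0:ℝ) < p := by rw [hp1]; positivity
  have hmeas_rpow : Measurable fun u : ℝ => u ^ p :=
    (Real.continuous_rpow_const hp0.le).measurable
  have hfae : AEMeasurable f (volume.restrict (Ioc 0 s)) := by
    refine AEMeasurable.div ?_ hmeas_rpow.aemeasurable
    exact aemeasurable_restrict_of_monotoneOn measurableSet_Ioc
      (hinv_mono.mono (fun x hx => le_of_lt hx.1))
  have hfae' : AEMeasurable f (volume.restrict (Ioi 0)) := by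
    refine AEMeasurable.div ?_ hmeas_rpow.aemeasurable
    exact aemeasurable_restrict_of_monotoneOn measurableSet_Ioi
      (hinv_mono.mono (fun x (hx : x ∈ Ioi 0) => mem_Ici.2 (le_of_lt hx)))
  have hNinv : 1/N < 1/m := one_div_lt_one_div_of_lt hm0 hmN
  have hNinv' : 1/N < 1/l := one_div_lt_one_div_of_lt hl0 hlN
  have hm1' : 1/m < 1 := by rw [div_lt_one hm0]; exact hm1
  have hl1' : 1/l < 1 := by rw [div_lt_one hl0]; exact hl
  have em1 : (-1:ℝ) < 1/m - p := by rw [hp1]; linarith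
  have el1 : (-1:ℝ) < 1/l - p := by rw [hp1]; linarith
  have hN1 : (0:ℝ) < 1/N := by positivity
  have emneg : 1/m - p < 0 := by rw [hp1]; linarith
  have elneg : 1/l - p < 0 := by rw [hp1]; linarith
  have hgint : IntervalIntegrable (fun u => Φinv s / s ^ (1/m) * u ^ (1/m - p)) volume 0 s :=
    (intervalIntegrable_rpow' em1).const_mul _
  have hhint : IntervalIntegrable (fun u => Φinv s / s ^ (1/l) * u ^ (1/l - p)) volume 0 s :=
    (intervalIntegrable_rpow' el1).const_mul _
  have hfle : ∀ u ∈ Icc (0:ℝ) s, f u ≤ Φinv s / s ^ (1/m) * u ^ (1/m - p) := by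
    rintro u ⟨hu0, hus⟩
    rcases eq_or_lt_of_le hu0 with h | h
    · rw [← h]
      show Φinv 0 / (0:ℝ) ^ p ≤ Φinv s / s ^ (1/m) * (0:ℝ) ^ (1/m - p)
      rw [hinv0, Real.zero_rpow emneg.ne, zero_div, mul_zero]
    · have hb := hBu u s h hus
      have hup : (0:ℝ) < u ^ p := Real.rpow_pos_of_pos h p
      calc f u = Φinv u / u ^ p := rfl
        _ ≤ Φinv s * (u/s) ^ (1/m) / u ^ p := (div_le_div_iff_of_pos_right hup).2 hb
        _ = Φinv s / s ^ (1/m) * u ^ (1/m - p) := by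
            rw [Real.div_rpow h.le hs.le, Real.rpow_sub h]
            field_simp
  have hfge : ∀ u ∈ Icc (0:ℝ) s, Φinv s / s ^ (1/l) * u ^ (1/l - p) ≤ f u := by
    rintro u ⟨hu0, hus⟩
    rcases eq_or_lt_of_le hu0 with h | h
    · rw [← h]
      show Φinv s / s ^ (1/l) * (0:ℝ) ^ (1/l - p) ≤ Φinv 0 / (0:ℝ) ^ p
      rw [hinv0, Real.zero_rpow elneg.ne, zero_div, mul_zero]
    · have hb := hBl u s h hus
      have hup : (0:ℝ) < u ^ p := Real.rpow_pos_of_pos h p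
      calc Φinv s / s ^ (1/l) * u ^ (1/l - p)
          = Φinv s * (u/s) ^ (1/l) / u ^ p := by
            rw [Real.div_rpow h.le hs.le, Real.rpow_sub h]
            field_simp
        _ ≤ Φinv u / u ^ p := (div_le_div_iff_of_pos_right hup).2 hb
        _ = f u := rfl
  have hfnonneg : ∀ u ∈ Ioc (0:ℝ) s, 0 ≤ f u := by
    rintro u ⟨hu0, hus⟩
    exact div_nonneg (hinv_nonneg u hu0.le) (Real.rpow_nonneg hu0.le p)
  have hfint : IntervalIntegrable f volume 0 s := by
    rw [intervalIntegrable_iff_integrableOn_Ioc_of_le hs.le]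
    apply Integrable.mono'
      ((intervalIntegrable_iff_integrableOn_Ioc_of_le hs.le).1 hgint)
      hfae.aestronglyMeasurable
    refine (ae_restrict_iff' measurableSet_Ioc).2 (ae_of_all _ ?_)
    intro u hu
    rw [Real.norm_eq_abs, abs_of_nonneg (hfnonneg u hu)]
    exact hfle u ⟨hu.1.le, hu.2⟩
  have hint_t : (∫ u in (0:ℝ)..s, f u) = t := hstar_inv t ht.le
  have hspos : ∀ q : ℝ, (0:ℝ) < s ^ q := fun q => Real.rpow_pos_of_pos hs q
  have hinvs : 0 < Φinv s := hinv_pos s hs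
  have key_int : ∀ q : ℝ, 0 < q → q < 1 → 1/N < q →
      (∫ u in (0:ℝ)..s, Φinv s / s ^ q * u ^ (q - p)) =
        Φinv s * s ^ (-(1/N)) / (q - 1/N) := by
    intro q hq0 hq1 hqN
    have hq1' : (-1:ℝ) < q - p := by rw [hp1]; linarith
    have hqp0 : (0:ℝ) < q - p + 1 := by linarith
    rw [intervalIntegral.integral_const_mul, integral_rpow (Or.inl hq1'),
      Real.zero_rpow hqp0.ne', sub_zero]
    have hexp : q - p + 1 = q - 1/N := by rw [hp1]; ring
    rw [hexp]
    have hsplit : s ^ (q - 1/N) = s ^ q * s ^ (-(1/N)) := by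
      rw [← Real.rpow_add hs, sub_eq_add_neg]
    rw [hsplit]
    have hsq : s ^ q ≠ 0 := (hspos q).ne'
    have hfac : Φinv s / s ^ q * (s ^ q * s ^ (-(1/N)) / (q - 1/N))
        = Φinv s * s ^ (-(1/N)) / (q - 1/N) * (s ^ q / s ^ q) := by ring
    rw [hfac, div_self hsq, mul_one]
  set A : ℝ := Φinv s * s ^ (-(1/N)) with hA
  have hA0 : 0 < A := mul_pos hinvs (hspos _)
  have hupper : t ≤ m * N / (N - m) * A := by
    have h1 := intervalIntegral.integral_mono_on hs.le hfint hgint hfle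
    rw [hint_t, key_int (1/m) (by positivity) hm1' hNinv] at h1
    have h2 : A / (1/m - 1/N) = m * N / (N - m) * A := by
      have hq : 1/m - 1/N = (N - m)/(m*N) := by field_simp
      rw [hq, div_div_eq_mul_div]
      ring
    rw [h2] at h1
    exact h1
  have hlower : l * N / (N - l) * A ≤ t := by
    have h1 := intervalIntegral.integral_mono_on hs.le hhint hfint hfge
    rw [hint_t, key_int (1/l) (by positivity) hl1' hNinv'] at h1
    have h2 : A / (1/l - 1/N) = l * N / (N - l) * A := by
      have hq : 1/l - 1/N = (N - l)/(l*N) := by field_simp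
      rw [hq, div_div_eq_mul_div]
      ring
    rw [h2] at h1
    exact h1
  -- derivative of the integral
  have hcontinv : ContinuousAt Φinv s := by
    apply continuousAt_of_monotoneOn_of_image_mem_nhds
      (hinv_mono.mono (fun x (hx : x ∈ Ioi 0) => le_of_lt hx)) (Ioi_mem_nhds hs)
    apply mem_of_superset (Ioi_mem_nhds hinvs)
    rintro z hz
    exact ⟨Φ z, hP z hz, (hinv z (le_of_lt hz)).1⟩
  have hcont : ContinuousAt f s := by
    apply ContinuousAt.div hcontinv
      (Real.continuousAt_rpow_const s p (Or.inl hs.ne'))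
      (hspos p).ne'
  have hmeasat : StronglyMeasurableAtFilter f (𝓝 s) :=
    ⟨Ioi 0, Ioi_mem_nhds hs, hfae'.aestronglyMeasurable⟩
  have hG : HasDerivAt (fun x => ∫ u in (0:ℝ)..x, f u) (f s) s :=
    intervalIntegral.integral_hasDerivAt_right hfint hmeasat hcont
  have hchain : HasDerivAt (fun τ => ∫ u in (0:ℝ)..(Φstar τ), f u)
      (f s * Φstar' t) t := HasDerivAt.comp t hG (hstar_deriv t ht)
  have hevt : (id : ℝ → ℝ) =ᶠ[𝓝 t] fun τ => ∫ u in (0:ℝ)..(Φstar τ), f u := by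
    filter_upwards [isOpen_Ioi.eventually_mem (mem_Ioi.2 ht)] with τ hτ
    exact (hstar_inv τ (le_of_lt hτ)).symm
  have hid : HasDerivAt (id : ℝ → ℝ) (f s * Φstar' t) t :=
    hchain.congr_of_eventuallyEq hevt
  have huniq : f s * Φstar' t = 1 := hid.unique (hasDerivAt_id t)
  have hfs0 : 0 < f s := div_pos hinvs (hspos p)
  have hstar'val : Φstar' t = s ^ p / Φinv s := by
    have h1 : Φstar' t = 1 / f s := by
      field_simp at huniq ⊢
      linarith [huniq]
    rw [h1, hf]
    rw [one_div_div]
  -- final algebra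
  have hsp : s ^ p = s ^ (1/N) * s := by
    rw [show p = 1/N + 1 from by rw [hp1]; ring, Real.rpow_add hs, Real.rpow_one]
  have hsN : s ^ (-(1/N)) = (s ^ (1/N))⁻¹ := Real.rpow_neg hs.le _
  have hmain : t * Φstar' t / Φstar t = t / A := by
    rw [hstar'val, ← hsdef, hA, hsp, hsN]
    have h1 : s ^ (1/N) ≠ 0 := (hspos _).ne'
    field_simp
  rw [hmain]
  constructor
  · rw [le_div_iff₀ hA0]
    linarith [hlower]
  · rw [div_le_iff₀ hA0]
    linarith [hupper]
end

section
/- Let Φ(t) = |t|^p ln(1+|t|) with 1 < p₀ < p < N−1 where p₀ = (−1+√(1+4N))/2, and φ(t) = Φ'(t)/t for t > 0. Then p ≤ φ(t)t²/Φ(t) ≤ p+1 for all t > 0, i.e. Φ satisfies (φ₂) with l = p and m = p+1. -/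
open Real Set

theorem plasticity_model
    (N : ℕ) (p : ℝ) (hN : 2 ≤ N)
    (hp0 : (-1 + Real.sqrt (1 + 4 * N)) / 2 < p)
    (hp1 : 1 < (-1 + Real.sqrt (1 + 4 * N)) / 2)
    (hpN : p < (N : ℝ) - 1)
    (Φ : ℝ → ℝ)
    (hΦ : ∀ t : ℝ, Φ t = |t| ^ p * Real.log (1 + |t|))
    (φ : ℝ → ℝ)
    (hφ : ∀ t : ℝ, 0 < t →
      φ t * t = p * t ^ (p - 1) * Real.log (1 + t) + t ^ p / (1 + t)) :
    ∀ t : ℝ, 0 < t →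
      p ≤ φ t * t ^ 2 / Φ t ∧ φ t * t ^ 2 / Φ t ≤ p + 1 := by
  intro t ht
  have hp : 1 < p := lt_trans hp1 hp0
  have h1t : (0:ℝ) < 1 + t := by linarith
  have hL : 0 < Real.log (1 + t) := Real.log_pos (by linarith)
  have htp : 0 < t ^ p := Real.rpow_pos_of_pos ht p
  have habs : |t| = t := abs_of_pos ht
  have hΦt : Φ t = t ^ p * Real.log (1 + t) := by rw [hΦ t, habs]
  have hΦpos : 0 < Φ t := by rw [hΦt]; positivity
  have hpow : t ^ (p - 1) * t = t ^ p := by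
    rw [← Real.rpow_add_one ht.ne' (p - 1)]
    norm_num
  have hA : φ t * t ^ 2 = p * t ^ p * Real.log (1 + t) + t ^ p * t / (1 + t) := by
    have : φ t * t ^ 2 = (φ t * t) * t := by ring
    rw [this, hφ t ht]
    rw [add_mul]
    congr 1
    · rw [mul_assoc, mul_comm (Real.log (1+t)) t, ← mul_assoc, mul_assoc p, hpow]
    · rw [div_mul_eq_mul_div]
  -- key inequality: t / (1+t) ≤ log (1+t)
  have hkey : t / (1 + t) ≤ Real.log (1 + t) := by
    have h := Real.add_one_le_exp (-Real.log (1 + t))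
    rw [Real.exp_neg, Real.exp_log h1t] at h
    have h3 : t / (1 + t) = 1 - (1 + t)⁻¹ := by field_simp; ring
    rw [h3]; linarith
  constructor
  · rw [le_div_iff₀ hΦpos, hA, hΦt]
    have : 0 ≤ t ^ p * t / (1 + t) := by positivity
    nlinarith
  · rw [div_le_iff₀ hΦpos, hA, hΦt]
    have h4 : t ^ p * t / (1 + t) ≤ t ^ p * Real.log (1 + t) := by
      rw [mul_div_assoc]
      exact mul_le_mul_of_nonneg_left hkey htp.le
    nlinarith
end
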